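/- A function f : GF(p)^n → GF(p) is bent if and only if the p^n × p^n matrix M with entries M_{x,y} = ζ^(f(x-y)) (x, y ranging over GF(p)^n) is a Butson matrix, i.e., M · conj(M)^T = p^n I. -/

import Mathlib

open Finset Matrix

/-- The primitive `p`-th root of unity `ζ = e^(2πi/p)`. -/
noncomputable def zeta (p : ℕ) : ℂ := Complex.exp (2 * Real.pi * Complex.I / p)

/-- The Walsh transform of `f : GF(p)^n → GF(p)`. -/
noncomputable def walsh (p n : ℕ) [NeZero p] (f : (Fin n → ZMod p) → ZMod p)
    (u : Fin n → ZMod p) : ℂ :=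
  ∑ x : Fin n → ZMod p, zeta p ^ (f x - ∑ i, u i * x i).val

set_option linter.unusedSectionVars false

noncomputable def ec (p : ℕ) [NeZero p] (a : ZMod p) : ℂ := zeta p ^ a.val

variable (p : ℕ) [NeZero p]

lemma zeta_pow_p : zeta p ^ p = 1 := by
  have hp : (p:ℂ) ≠ 0 := Nat.cast_ne_zero.mpr (NeZero.ne p)
  rw [zeta, ← Complex.exp_nat_mul]
  have : (p:ℂ) * (2 * Real.pi * Complex.I / p) = 2 * Real.pi * Complex.I := by
    field_simp
  rw [this, Complex.exp_two_pi_mul_I]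

lemma ec_add (a b : ZMod p) : ec p (a + b) = ec p a * ec p b := by
  unfold ec
  rw [← pow_add, ZMod.val_add]
  exact (pow_eq_pow_mod _ (zeta_pow_p p)).symm

lemma ec_zero : ec p (0 : ZMod p) = 1 := by simp [ec]

lemma abs_zeta : ‖zeta p‖ = 1 := by
  rw [zeta, Complex.norm_exp]
  norm_num [Complex.div_re, Complex.mul_re, Complex.mul_im]

lemma ec_conj (a : ZMod p) : (starRingEnd ℂ) (ec p a) = ec p (-a) := by
  have h1 : ec p a * ec p (-a) = 1 := by rw [← ec_add]; simp [ec_zero]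
  have habs : ‖ec p a‖ = 1 := by
    unfold ec; rw [norm_pow, abs_zeta, one_pow]
  rw [← Complex.inv_eq_conj habs]
  exact inv_eq_of_mul_eq_one_right h1

lemma sum_ec (hp : p.Prime) : ∑ a : ZMod p, ec p a = 0 := by
  have hprim := Complex.isPrimitiveRoot_exp p (NeZero.ne p)
  have hne1 : zeta p ≠ 1 := hprim.ne_one hp.one_lt
  have hrange : ∑ i ∈ Finset.range p, zeta p ^ i = 0 := by
    rw [geom_sum_eq hne1, zeta_pow_p, sub_self, zero_div]
  rw [← hrange]
  obtain ⟨k, rfl⟩ := Nat.exists_eq_succ_of_ne_zero (NeZero.ne p)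
  exact Fin.sum_univ_eq_sum_range _ _

lemma sum_ec_mul (hp : p.Prime) (c : ZMod p) (hc : c ≠ 0) :
    ∑ a : ZMod p, ec p (a * c) = 0 := by
  haveI := Fact.mk hp
  calc ∑ a : ZMod p, ec p (a * c) = ∑ a : ZMod p, ec p a :=
        Fintype.sum_equiv (Equiv.mulRight₀ c hc) _ _ (fun a => rfl)
    _ = 0 := sum_ec p hp

lemma ec_sum {ι : Type*} (s : Finset ι) (g : ι → ZMod p) :
    ec p (∑ i ∈ s, g i) = ∏ i ∈ s, ec p (g i) := by
  induction s using Finset.cons_induction with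
  | empty => simp [ec_zero]
  | cons a s ha ih => rw [Finset.sum_cons, Finset.prod_cons, ec_add, ih]

lemma ortho (hp : p.Prime) (n : ℕ) (a : Fin n → ZMod p) :
    ∑ u : Fin n → ZMod p, ec p (∑ i, u i * a i)
      = if a = 0 then (p:ℂ)^n else 0 := by
  have h1 : ∀ u : Fin n → ZMod p, ec p (∑ i, u i * a i) = ∏ i, ec p (u i * a i) :=
    fun u => ec_sum p _ _
  simp_rw [h1]
  rw [← Fintype.piFinset_univ, Finset.sum_prod_piFinset univ (fun i c => ec p (c * a i))]
  by_cases ha : a = 0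
  · subst ha
    simp [ec_zero, Finset.card_univ, ZMod.card]
  · rw [if_neg ha]
    obtain ⟨i, hi⟩ := Function.ne_iff.mp ha
    exact Finset.prod_eq_zero (Finset.mem_univ i) (sum_ec_mul p hp (a i) hi)

noncomputable def corr (n : ℕ) (f : (Fin n → ZMod p) → ZMod p)
    (a : Fin n → ZMod p) : ℂ :=
  ∑ t : Fin n → ZMod p, ec p (f (a + t) - f t)

lemma L1 (n : ℕ) (f : (Fin n → ZMod p) → ZMod p) (u : Fin n → ZMod p) :
    walsh p n f u * (starRingEnd ℂ) (walsh p n f u)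
      = ∑ a : Fin n → ZMod p, ec p (-∑ i, u i * a i) * corr p n f a := by
  have hw : walsh p n f u = ∑ x : Fin n → ZMod p, ec p (f x - ∑ i, u i * x i) := rfl
  rw [hw, map_sum, Finset.sum_mul_sum]
  simp_rw [ec_conj, ← ec_add]
  unfold corr
  simp_rw [Finset.mul_sum, ← ec_add]
  conv_rhs => rw [Finset.sum_comm]
  rw [Finset.sum_comm]
  refine Finset.sum_congr rfl fun t _ => ?_
  refine Fintype.sum_equiv (Equiv.subRight t) _ _ fun x => ?_
  congr 1
  have h1 : (Equiv.subRight t x) + t = x := by simp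
  rw [h1]
  have h2 : ∑ i, u i * (Equiv.subRight t x) i
      = (∑ i, u i * x i) - ∑ i, u i * t i := by
    simp [Equiv.subRight, mul_sub, Finset.sum_sub_distrib]
  rw [h2]
  ring

lemma L2 (hp : p.Prime) (n : ℕ) (f : (Fin n → ZMod p) → ZMod p)
    (b : Fin n → ZMod p) :
    ∑ u : Fin n → ZMod p, ec p (∑ i, u i * b i) *
        (∑ a : Fin n → ZMod p, ec p (-∑ i, u i * a i) * corr p n f a)
      = (p:ℂ)^n * corr p n f b := by
  have key : ∀ (u a : Fin n → ZMod p),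
      ec p (∑ i, u i * b i) * (ec p (-∑ i, u i * a i) * corr p n f a)
        = corr p n f a * ec p (∑ i, u i * (b - a) i) := by
    intro u a
    rw [← mul_assoc, ← ec_add]
    have h2 : ∑ i, u i * (b - a) i = (∑ i, u i * b i) - ∑ i, u i * a i := by
      rw [← Finset.sum_sub_distrib]
      exact Finset.sum_congr rfl fun i _ => by simp [mul_sub]
    rw [h2, sub_eq_add_neg]; ring
  simp_rw [Finset.mul_sum, key]
  rw [Finset.sum_comm]
  simp_rw [← Finset.mul_sum, ortho p hp n, sub_eq_zero]
  simp only [mul_ite, mul_zero]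
  rw [Finset.sum_ite_eq univ b]
  simp [mul_comm]

lemma absW (n : ℕ) (w : ℂ) :
    ‖w‖ = (p : ℝ) ^ ((n : ℝ) / 2) ↔ w * (starRingEnd ℂ) w = (p:ℂ)^n := by
  have hp0 : (0:ℝ) ≤ (p:ℝ) := Nat.cast_nonneg p
  have hkey : ((p : ℝ) ^ ((n : ℝ) / 2)) ^ 2 = (p:ℝ) ^ n := by
    rw [← Real.rpow_natCast ((p:ℝ) ^ ((n:ℝ)/2)) 2, ← Real.rpow_mul hp0]
    have h2 : ((n:ℝ)/2) * ((2:ℕ):ℝ) = (n:ℝ) := by push_cast; ring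
    rw [h2, Real.rpow_natCast]
  constructor
  · intro h
    rw [Complex.mul_conj, ← Complex.sq_norm, h, hkey]
    push_cast
    ring
  · intro h
    have hns : Complex.normSq w = (p:ℝ)^n := by
      have := h
      rw [Complex.mul_conj] at this
      exact_mod_cast this
    rw [Complex.norm_def, hns, ← hkey]
    exact Real.sqrt_sq (by positivity)

lemma matrix_iff (n : ℕ) (f : (Fin n → ZMod p) → ZMod p) :
    ((Matrix.of fun x y : Fin n → ZMod p => zeta p ^ (f (x - y)).val) *
          (Matrix.of fun x y : Fin n → ZMod p => zeta p ^ (f (x - y)).val)ᴴ =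
        ((p : ℂ) ^ n) • (1 : Matrix (Fin n → ZMod p) (Fin n → ZMod p) ℂ))
      ↔ ∀ a : Fin n → ZMod p, corr p n f a = if a = 0 then (p:ℂ)^n else 0 := by
  have hent : ∀ x z : Fin n → ZMod p,
      ((Matrix.of fun x y : Fin n → ZMod p => zeta p ^ (f (x - y)).val) *
        (Matrix.of fun x y : Fin n → ZMod p => zeta p ^ (f (x - y)).val)ᴴ) x z
        = corr p n f (x - z) := by
    intro x z
    rw [Matrix.mul_apply]
    have step : ∀ y : Fin n → ZMod p,
        (Matrix.of fun x y : Fin n → ZMod p => zeta p ^ (f (x - y)).val) x y *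
          ((Matrix.of fun x y : Fin n → ZMod p => zeta p ^ (f (x - y)).val)ᴴ) y z
        = ec p (f (x - y) - f (z - y)) := by
      intro y
      show ec p (f (x - y)) * (starRingEnd ℂ) (ec p (f (z - y))) = _
      rw [ec_conj, ← ec_add, ← sub_eq_add_neg]
    simp_rw [step]
    unfold corr
    refine Fintype.sum_equiv (Equiv.subLeft z) _ _ fun y => ?_
    show ec p (f (x - y) - f (z - y)) = ec p (f (x - z + (z - y)) - f (z - y))
    have h4 : x - z + (z - y) = x - y := by abel
    rw [h4]
  have hsmul : ∀ x z : Fin n → ZMod p,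
      (((p : ℂ) ^ n) • (1 : Matrix (Fin n → ZMod p) (Fin n → ZMod p) ℂ)) x z
        = if x - z = 0 then (p:ℂ)^n else 0 := by
    intro x z
    simp [Matrix.smul_apply, Matrix.one_apply, sub_eq_zero]
  constructor
  · intro h a
    have := congrFun (congrFun h a) 0
    rw [hent, hsmul] at this
    simpa using this
  · intro h
    ext x z
    rw [hent, hsmul]
    exact h (x - z)


/-- `f` is bent iff the matrix `M` with `M_{x,y} = ζ^(f(x-y))` is a Butson matrix,
i.e. `M · conj(M)ᵀ = p^n · I`. -/
theorem bent_iff_butson (p n : ℕ) (hp : p.Prime) [NeZero p]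
    (f : (Fin n → ZMod p) → ZMod p) :
    (∀ u, ‖walsh p n f u‖ = (p : ℝ) ^ ((n : ℝ) / 2)) ↔
      (Matrix.of fun x y : Fin n → ZMod p => zeta p ^ (f (x - y)).val) *
          (Matrix.of fun x y : Fin n → ZMod p => zeta p ^ (f (x - y)).val)ᴴ =
        ((p : ℂ) ^ n) • (1 : Matrix (Fin n → ZMod p) (Fin n → ZMod p) ℂ) := by

  rw [matrix_iff p n f]
  have hpn : ((p:ℂ)^n) ≠ 0 := pow_ne_zero _ (Nat.cast_ne_zero.mpr (NeZero.ne p))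
  constructor
  · intro hbent a
    have hW : ∀ u, walsh p n f u * (starRingEnd ℂ) (walsh p n f u) = (p:ℂ)^n :=
      fun u => (absW p n _).mp (hbent u)
    have h3 : ∑ u : Fin n → ZMod p, ec p (∑ i, u i * a i) * ((p:ℂ)^n)
        = (p:ℂ)^n * corr p n f a := by
      rw [← L2 p hp n f a]
      exact Finset.sum_congr rfl fun u _ => by rw [← L1 p n f u, hW u]
    rw [← Finset.sum_mul, ortho p hp n a] at h3
    by_cases ha : a = 0
    · rw [if_pos ha] at h3 ⊢
      exact (mul_left_cancel₀ hpn h3).symm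
    · rw [if_neg ha] at h3 ⊢
      rw [zero_mul] at h3
      exact ((mul_eq_zero.mp h3.symm).resolve_left hpn)
  · intro hcorr u
    rw [absW p n, L1 p n f u]
    simp_rw [hcorr]
    simp only [mul_ite, mul_zero]
    rw [Finset.sum_ite_eq' univ 0]
    simp [ec_zero]
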